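/- Let L be a complete lattice and X a set of elements of L not containing ⊤, and suppose C(L) satisfies the complete max property. Then the following are equivalent: (1) every element of X is both maximal and minimal in X (Max(X) = X = Min(X)); (2) (X, τ^cl) is Hausdorff (T2); (3) (X, τ^cl) is T1; (4) (X, τ^cl) is discrete. -/

import Mathlib

namespace ZariskiLattice

variable {L : Type*} [CompleteLattice L]

/-- The variety of `a` inside `X`: the points of `X` above `a`. -/
def V (X : Set L) (a : L) : Set X := {p : X | a ≤ (p : L)}

/-- The classical Zariski topology on `X`, generated by the subbase
`{X \ V a | a ∈ L}`. -/
def tauCl (X : Set L) : TopologicalSpace X :=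
  TopologicalSpace.generateFrom {s : Set X | ∃ a : L, s = (V X a)ᶜ}

/-- The finer patch topology on `X`, generated by the subbase
`{V a ∩ (X \ V b) | a, b ∈ L}`. -/
def tauFp (X : Set L) : TopologicalSpace X :=
  TopologicalSpace.generateFrom {s : Set X | ∃ a b : L, s = V X a ∩ (V X b)ᶜ}

/-- `I(A) = ⨅_{p ∈ A} p` for a subset `A ⊆ X`. -/
def lanI (X : Set L) (A : Set X) : L := ⨅ p ∈ A, (p : L)

/-- The radical `√a = I(V(a))` of an element `a`. -/
def rad (X : Set L) (a : L) : L := lanI X (V X a)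

/-- The set of radical elements `C(L) = {a | √a = a}`. -/
def CL (X : Set L) : Set L := {a : L | rad X a = a}

/-- `L` is `X`-top: the varieties are closed under finite unions. -/
def IsXTop (X : Set L) : Prop := ∀ a b : L, ∃ c : L, V X a ∪ V X b = V X c

/-- The set of maximal elements of `C(L) \ {⊤}`. -/
def MaxC (X : Set L) : Set L :=
  {q : L | q ∈ CL X ∧ q ≠ ⊤ ∧ ∀ r ∈ CL X, r ≠ ⊤ → q ≤ r → r = q}

/-- `C(L)` satisfies the complete max property. -/
def CompleteMax (X : Set L) : Prop :=
  ∀ q ∈ MaxC X, ¬ (⨅ p ∈ MaxC X \ {q}, p) ≤ q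

lemma key (X : Set L) {U : Set X} (hU : (tauCl X).IsOpen U) :
    ∀ p q : X, (p : L) ≤ q → q ∈ U → p ∈ U := by
  induction hU with
  | basic s hs =>
    obtain ⟨a, rfl⟩ := hs
    intro p q hpq hq ha
    exact hq (le_trans ha hpq)
  | univ => intro p q _ _; trivial
  | inter s t _ _ ihs iht => intro p q h hq; exact ⟨ihs p q h hq.1, iht p q h hq.2⟩
  | sUnion S _ ih =>
    rintro p q h ⟨s, hsS, hq⟩
    exact ⟨s, hsS, ih s hsS p q h hq⟩

lemma mem_maxC (X : Set L) (hX : (⊤ : L) ∉ X)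
    (hanti : ∀ p ∈ X, ∀ q ∈ X, p ≤ q → q = p) :
    ∀ p ∈ X, p ∈ MaxC X := by
  intro p hp
  have hpC : ∀ x ∈ X, x ∈ CL X := by
    intro x hx
    refine le_antisymm ?_ ?_
    · exact iInf₂_le (⟨x, hx⟩ : X) le_rfl
    · exact le_iInf₂ fun q hq => hq
  refine ⟨hpC p hp, fun h => hX (h ▸ hp), ?_⟩
  intro r hr hrtop hpr
  have hVr : (V X r).Nonempty := by
    by_contra h
    rw [Set.not_nonempty_iff_eq_empty] at h
    have : rad X r = ⊤ := by
      simp [rad, lanI, h]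
    exact hrtop (hr.symm.trans this)
  obtain ⟨q, hq⟩ := hVr
  have hq2 : (q : L) = p := hanti p hp q q.2 (le_trans hpr hq)
  exact le_antisymm (hq2 ▸ hq) hpr

lemma singleton_open (X : Set L) (hX : (⊤ : L) ∉ X) (hCM : CompleteMax X)
    (hanti : ∀ p ∈ X, ∀ q ∈ X, p ≤ q → q = p) (P : X) :
    (tauCl X).IsOpen {P} := by
  have hmem := mem_maxC X hX hanti
  set t : L := ⨅ p ∈ MaxC X \ {(P : L)}, p with ht
  have hPt : ¬ t ≤ (P : L) := hCM (P : L) (hmem P P.2)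
  have : ({P} : Set X) = (V X t)ᶜ := by
    ext Q
    constructor
    · rintro rfl; exact hPt
    · intro hQ
      by_contra hne
      have hvalne : (Q : L) ≠ (P : L) := fun h => hne (Subtype.ext h)
      exact hQ (iInf₂_le (Q : L) ⟨hmem Q Q.2, hvalne⟩)
  rw [this]
  exact TopologicalSpace.GenerateOpen.basic _ ⟨t, rfl⟩

lemma discrete_of_anti (X : Set L) (hX : (⊤ : L) ∉ X) (hCM : CompleteMax X)
    (hanti : ∀ p ∈ X, ∀ q ∈ X, p ≤ q → q = p) :
    @DiscreteTopology ↥X (tauCl X) := by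
  letI : TopologicalSpace ↥X := tauCl X
  exact discreteTopology_iff_isOpen_singleton.mpr (singleton_open X hX hCM hanti)

lemma anti_of_t1 (X : Set L) (h : @T1Space ↥X (tauCl X)) :
    ∀ p ∈ X, ∀ q ∈ X, p ≤ q → q = p := by
  letI : TopologicalSpace ↥X := tauCl X
  intro p hp q hq hpq
  by_contra hne
  have hopen : IsOpen ({(⟨p, hp⟩ : X)}ᶜ) := (isClosed_singleton).isOpen_compl
  have hq' : (⟨q, hq⟩ : X) ∈ ({(⟨p, hp⟩ : X)}ᶜ : Set X) := by
    simp only [Set.mem_compl_iff, Set.mem_singleton_iff]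
    intro h'
    exact hne (congrArg Subtype.val h')
  exact (key X hopen ⟨p, hp⟩ ⟨q, hq⟩ hpq hq') rfl

/-- If `C(L)` satisfies the complete max property, then the following
are equivalent: (1) `Max(X) = X = Min(X)`; (2) `(X, τ^cl)` is T2; (3) `(X, τ^cl)` is
T1; (4) `(X, τ^cl)` is discrete. -/
theorem tfae_of_completeMax (X : Set L) (hX : (⊤ : L) ∉ X) (hCM : CompleteMax X) :
    (((∀ p ∈ X, ∀ q ∈ X, p ≤ q → q = p) ∧ (∀ p ∈ X, ∀ q ∈ X, q ≤ p → q = p)) ↔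
      @T2Space ↥X (tauCl X)) ∧
    (@T2Space ↥X (tauCl X) ↔ @T1Space ↥X (tauCl X)) ∧
    (@T1Space ↥X (tauCl X) ↔ @DiscreteTopology ↥X (tauCl X)) := by
  letI : TopologicalSpace ↥X := tauCl X
  have t2_of_anti : (∀ p ∈ X, ∀ q ∈ X, p ≤ q → q = p) → T2Space ↥X := fun h => by
    have := discrete_of_anti X hX hCM h
    exact DiscreteTopology.toT2Space
  have t1_of_t2 : T2Space ↥X → T1Space ↥X := fun h => h.t1Space
  refine ⟨⟨fun h => t2_of_anti h.1, fun h => ?_⟩, ⟨t1_of_t2, fun h => ?_⟩,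
    ⟨fun h => discrete_of_anti X hX hCM (anti_of_t1 X h), fun h => ?_⟩⟩
  · have ha := anti_of_t1 X (t1_of_t2 h)
    exact ⟨ha, fun p hp q hq hqp => (ha q hq p hp hqp).symm⟩
  · exact t2_of_anti (anti_of_t1 X h)
  · exact t1_of_t2 DiscreteTopology.toT2Space

end ZariskiLattice
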